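/- Let t be an attack–defense tree term over B in which each basic event occurs at most once, let p : B → [0,1], and let X₂ be the set of unsatisfying assignments of t, i.e., X₂ = { S ⊆ B(t) : eval_S(t) = ff }. Then the probabilistic bottom-up semantics satisfies V_p(t) = 1 − Σ_{S ∈ X₂} ( Π_{b ∈ S} p(b) · Π_{b ∈ B(t) \ S} (1 − p(b)) ). -/

import Mathlib

/-- Attack–defense tree terms over a type `B` of basic events. -/
inductive ADT (B : Type*) where
  | leaf : B → ADT B
  | and : ADT B → ADT B → ADT B
  | or : ADT B → ADT B → ADT B
  | not : ADT B → ADT B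

namespace ADT

variable {B : Type*} [DecidableEq B]

/-- The finite set `B(t)` of basic events occurring in a term. -/
def events : ADT B → Finset B
  | .leaf b => {b}
  | .and t₁ t₂ => events t₁ ∪ events t₂
  | .or t₁ t₂ => events t₁ ∪ events t₂
  | .not t => events t

/-- Linearity: each basic event occurs at most once in the term. -/
def Linear : ADT B → Prop
  | .leaf _ => True
  | .and t₁ t₂ => Linear t₁ ∧ Linear t₂ ∧ Disjoint (events t₁) (events t₂)
  | .or t₁ t₂ => Linear t₁ ∧ Linear t₂ ∧ Disjoint (events t₁) (events t₂)
  | .not t => Linear t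

/-- Boolean semantics `eval_S(t)` for an assignment `S ⊆ B` (the set of basic
events set to true). -/
def eval (S : Finset B) : ADT B → Bool
  | .leaf b => decide (b ∈ S)
  | .and t₁ t₂ => eval S t₁ && eval S t₂
  | .or t₁ t₂ => eval S t₁ || eval S t₂
  | .not t => !eval S t


/-- The probabilistic bottom-up traversal semantics `V_p(t)`. -/
def Vp (p : B → ℝ) : ADT B → ℝ
  | .leaf b => p b
  | .and t₁ t₂ => Vp p t₁ * Vp p t₂
  | .or t₁ t₂ => Vp p t₁ + Vp p t₂ - Vp p t₁ * Vp p t₂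
  | .not t => 1 - Vp p t

/-- weight of an assignment -/
def W (p : B → ℝ) (A S : Finset B) : ℝ := (∏ b ∈ S, p b) * ∏ b ∈ A \ S, (1 - p b)

lemma sum_W_total (p : B → ℝ) (A : Finset B) : ∑ S ∈ A.powerset, W p A S = 1 := by
  have h := Finset.prod_add (fun b => p b) (fun b => 1 - p b) A
  simp only [add_sub_cancel, Finset.prod_const_one] at h
  simp only [W]
  linarith

lemma eval_congr (t : ADT B) : ∀ S S' : Finset B,
    S ∩ t.events = S' ∩ t.events → eval S t = eval S' t := by
  induction t with
  | leaf b =>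
    intro S S' h
    have := Finset.ext_iff.mp h b
    simp [events] at this
    simp [eval, this]
  | and t₁ t₂ ih₁ ih₂ =>
    intro S S' h
    have h1 : S ∩ t₁.events = S' ∩ t₁.events := by
      ext x; have := Finset.ext_iff.mp h x; simp [events] at this ⊢; tauto
    have h2 : S ∩ t₂.events = S' ∩ t₂.events := by
      ext x; have := Finset.ext_iff.mp h x; simp [events] at this ⊢; tauto
    simp [eval, ih₁ _ _ h1, ih₂ _ _ h2]
  | or t₁ t₂ ih₁ ih₂ =>
    intro S S' h
    have h1 : S ∩ t₁.events = S' ∩ t₁.events := by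
      ext x; have := Finset.ext_iff.mp h x; simp [events] at this ⊢; tauto
    have h2 : S ∩ t₂.events = S' ∩ t₂.events := by
      ext x; have := Finset.ext_iff.mp h x; simp [events] at this ⊢; tauto
    simp [eval, ih₁ _ _ h1, ih₂ _ _ h2]
  | not t ih =>
    intro S S' h
    simp [eval, ih _ _ h]

/-- splitting the weighted sum over subsets of a disjoint union -/
lemma key (p : B → ℝ) {A₁ A₂ : Finset B} (hd : Disjoint A₁ A₂)
    (Q₁ Q₂ : Finset B → Bool)
    (h1 : ∀ S, Q₁ (S ∩ A₁) = Q₁ S) (h2 : ∀ S, Q₂ (S ∩ A₂) = Q₂ S) :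
    (∑ S ∈ A₁.powerset.filter (fun S => Q₁ S = true), W p A₁ S) *
      (∑ S ∈ A₂.powerset.filter (fun S => Q₂ S = true), W p A₂ S) =
    ∑ S ∈ (A₁ ∪ A₂).powerset.filter (fun S => Q₁ S = true ∧ Q₂ S = true),
      W p (A₁ ∪ A₂) S := by
  rw [Finset.sum_mul_sum, ← Finset.sum_product']
  apply Finset.sum_nbij' (fun P => P.1 ∪ P.2) (fun S => (S ∩ A₁, S ∩ A₂))
  · rintro ⟨S₁, S₂⟩ hP
    simp only [Finset.mem_product, Finset.mem_filter, Finset.mem_powerset] at hP ⊢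
    obtain ⟨⟨hS₁, hQ₁⟩, hS₂, hQ₂⟩ := hP
    have e1 : (S₁ ∪ S₂) ∩ A₁ = S₁ := by
      ext x
      simp only [Finset.mem_inter, Finset.mem_union]
      constructor
      · rintro ⟨hx | hx, hA⟩
        · exact hx
        · exact absurd (hd.symm.forall_ne_finset (hS₂ hx) hA rfl) (fun h => h)
      · intro hx; exact ⟨Or.inl hx, hS₁ hx⟩
    have e2 : (S₁ ∪ S₂) ∩ A₂ = S₂ := by
      ext x
      simp only [Finset.mem_inter, Finset.mem_union]
      constructor
      · rintro ⟨hx | hx, hA⟩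
        · exact absurd (hd.forall_ne_finset (hS₁ hx) hA rfl) (fun h => h)
        · exact hx
      · intro hx; exact ⟨Or.inr hx, hS₂ hx⟩
    refine ⟨Finset.union_subset_union hS₁ hS₂, ?_, ?_⟩
    · rw [← h1, e1]; exact hQ₁
    · rw [← h2, e2]; exact hQ₂
  · intro S hS
    simp only [Finset.mem_filter, Finset.mem_powerset, Finset.mem_product] at hS ⊢
    obtain ⟨hsub, hQ₁, hQ₂⟩ := hS
    exact ⟨⟨Finset.inter_subset_right, by rw [h1]; exact hQ₁⟩,
      Finset.inter_subset_right, by rw [h2]; exact hQ₂⟩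
  · rintro ⟨S₁, S₂⟩ hP
    simp only [Finset.mem_product, Finset.mem_filter, Finset.mem_powerset] at hP
    obtain ⟨⟨hS₁, _⟩, hS₂, _⟩ := hP
    ext x
    · simp only [Finset.mem_inter, Finset.mem_union]
      constructor
      · rintro ⟨hx | hx, hA⟩
        · exact hx
        · exact absurd (hd.symm.forall_ne_finset (hS₂ hx) hA rfl) (fun h => h)
      · intro hx; exact ⟨Or.inl hx, hS₁ hx⟩
    · simp only [Finset.mem_inter, Finset.mem_union]
      constructor
      · rintro ⟨hx | hx, hA⟩
        · exact absurd (hd.forall_ne_finset (hS₁ hx) hA rfl) (fun h => h)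
        · exact hx
      · intro hx; exact ⟨Or.inr hx, hS₂ hx⟩
  · intro S hS
    simp only [Finset.mem_filter, Finset.mem_powerset] at hS
    rw [← Finset.inter_union_distrib_left, Finset.inter_eq_left.mpr hS.1]
  · rintro ⟨S₁, S₂⟩ hP
    simp only [Finset.mem_product, Finset.mem_filter, Finset.mem_powerset] at hP
    obtain ⟨⟨hS₁, _⟩, hS₂, _⟩ := hP
    have hdS : Disjoint S₁ S₂ := hd.mono hS₁ hS₂
    have hdiff : (A₁ ∪ A₂) \ (S₁ ∪ S₂) = (A₁ \ S₁) ∪ (A₂ \ S₂) := by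
      ext x
      simp only [Finset.mem_sdiff, Finset.mem_union, not_or]
      constructor
      · rintro ⟨hA | hA, h1', h2'⟩
        · exact Or.inl ⟨hA, h1'⟩
        · exact Or.inr ⟨hA, h2'⟩
      · rintro (⟨hA, hn⟩ | ⟨hA, hn⟩)
        · exact ⟨Or.inl hA, hn, fun hx => hd.forall_ne_finset hA (hS₂ hx) rfl⟩
        · exact ⟨Or.inr hA, fun hx => hd.symm.forall_ne_finset hA (hS₁ hx) rfl, hn⟩
    have hdd : Disjoint (A₁ \ S₁) (A₂ \ S₂) :=
      hd.mono (Finset.sdiff_subset) (Finset.sdiff_subset)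
    simp only [W, hdiff, Finset.prod_union hdS, Finset.prod_union hdd]
    ring

lemma one_sub_sat (p : B → ℝ) (s : ADT B)
    (h : Vp p s = ∑ S ∈ s.events.powerset.filter (fun S => eval S s = true), W p s.events S) :
    1 - Vp p s = ∑ S ∈ s.events.powerset.filter (fun S => (!eval S s) = true), W p s.events S := by
  rw [h]
  have tot := sum_W_total p s.events
  rw [← Finset.sum_filter_add_sum_filter_not s.events.powerset
    (fun S => eval S s = true) (W p s.events)] at tot
  have hf : s.events.powerset.filter (fun S => (!eval S s) = true)
      = s.events.powerset.filter (fun S => ¬ eval S s = true) := by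
    apply Finset.filter_congr; intro S _; simp
  rw [hf]
  linarith

lemma Vp_eq_sum_sat (t : ADT B) (hlin : t.Linear) (p : B → ℝ) :
    Vp p t = ∑ S ∈ t.events.powerset.filter (fun S => t.eval S = true), W p t.events S := by
  induction t with
  | leaf b =>
    have hpow : ({b} : Finset B).powerset = {∅, {b}} := by
      rw [show ({b} : Finset B) = insert b ∅ from rfl, Finset.powerset_insert,
        Finset.powerset_empty]
      simp
    simp only [Vp, events, eval, hpow]
    rw [show ({∅, {b}} : Finset (Finset B)) = insert ∅ {{b}} from rfl,
      Finset.filter_insert]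
    simp only [Finset.notMem_empty, decide_eq_true_eq, if_false, if_neg]
    rw [Finset.filter_singleton]
    simp [W]
  | and t₁ t₂ ih₁ ih₂ =>
    obtain ⟨hl₁, hl₂, hd⟩ := hlin
    rw [Vp, ih₁ hl₁, ih₂ hl₂]
    rw [key p hd (fun S => eval S t₁) (fun S => eval S t₂)
      (fun S => eval_congr t₁ _ _ (by rw [Finset.inter_assoc, Finset.inter_self]))
      (fun S => eval_congr t₂ _ _ (by rw [Finset.inter_assoc, Finset.inter_self]))]
    apply Finset.sum_congr
    · apply Finset.filter_congr
      intro S _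
      simp [eval]
    · intros; rfl
  | or t₁ t₂ ih₁ ih₂ =>
    obtain ⟨hl₁, hl₂, hd⟩ := hlin
    have h1 := one_sub_sat p t₁ (ih₁ hl₁)
    have h2 := one_sub_sat p t₂ (ih₂ hl₂)
    have heq : Vp p (ADT.or t₁ t₂) = 1 - (1 - Vp p t₁) * (1 - Vp p t₂) := by
      simp [Vp]; ring
    rw [heq, h1, h2]
    rw [key p hd (fun S => !eval S t₁) (fun S => !eval S t₂)
      (fun S => congrArg Bool.not
        (eval_congr t₁ _ _ (by rw [Finset.inter_assoc, Finset.inter_self])))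
      (fun S => congrArg Bool.not
        (eval_congr t₂ _ _ (by rw [Finset.inter_assoc, Finset.inter_self])))]
    have tot := sum_W_total p (events t₁ ∪ events t₂)
    rw [← Finset.sum_filter_add_sum_filter_not (events t₁ ∪ events t₂).powerset
      (fun S => eval S (ADT.or t₁ t₂) = true) (W p (events t₁ ∪ events t₂))] at tot
    have hf : ((events t₁ ∪ events t₂).powerset.filter
          (fun S => (!eval S t₁) = true ∧ (!eval S t₂) = true)) =
        (events t₁ ∪ events t₂).powerset.filter
          (fun S => ¬ eval S (ADT.or t₁ t₂) = true) := by
      apply Finset.filter_congr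
      intro S _
      simp [eval]
    rw [hf]
    simp only [events] at tot ⊢
    linarith
  | not t ih =>
    rw [Vp, ih hlin]
    have tot := sum_W_total p (events t)
    rw [← Finset.sum_filter_add_sum_filter_not (events t).powerset
      (fun S => eval S t = true) (W p (events t))] at tot
    have hf : (events (ADT.not t)).powerset.filter (fun S => eval S (ADT.not t) = true)
        = (events t).powerset.filter (fun S => ¬ eval S t = true) := by
      apply Finset.filter_congr
      intro S _
      simp [eval]
    show _ = ∑ S ∈ _, W p (events t) S
    rw [hf]
    linarith

/-- for a linear term, the bottom-up probability equals one minus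
the sum, over all unsatisfying assignments `S`, of the probability that exactly
the basic events in `S` succeed. -/
theorem Vp_eq_one_sub_sum_unsatisfying (t : ADT B) (hlin : t.Linear) (p : B → ℝ)
    (hp : ∀ b, p b ∈ Set.Icc (0 : ℝ) 1) :
    Vp p t =
      1 - ∑ S ∈ t.events.powerset.filter (fun S => t.eval S = false),
        (∏ b ∈ S, p b) * ∏ b ∈ t.events \ S, (1 - p b) := by
  rw [Vp_eq_sum_sat t hlin p]
  have tot := sum_W_total p t.events
  rw [← Finset.sum_filter_add_sum_filter_not t.events.powerset
    (fun S => t.eval S = false) (W p t.events)] at tot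
  have hf : t.events.powerset.filter (fun S => ¬ t.eval S = false)
      = t.events.powerset.filter (fun S => t.eval S = true) := by
    apply Finset.filter_congr
    intro S _
    simp
  rw [hf] at tot
  have : ∑ S ∈ t.events.powerset.filter (fun S => t.eval S = false),
      (∏ b ∈ S, p b) * ∏ b ∈ t.events \ S, (1 - p b)
    = ∑ S ∈ t.events.powerset.filter (fun S => t.eval S = false), W p t.events S := rfl
  rw [this]
  linarith

end ADT
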